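/- For every x ∈ (3/2, 2), the identity 4^{x-1}·√π·Γ(2-x)/Γ(3/2-x) = 2^{2x-1} - x·∫_0^{1/2} t^{1-x}(1-t)^{-1-x} dt holds. -/

import Mathlib

open MeasureTheory Set intervalIntegral

private lemma aux_intInt (r s : ℝ) (hr : -1 < r) :
    IntervalIntegrable (fun t : ℝ => t ^ r * (1 - t) ^ s) volume 0 (1/2) := by
  apply IntervalIntegrable.mul_continuousOn (intervalIntegral.intervalIntegrable_rpow' hr)
  apply continuousOn_of_forall_continuousAt
  intro t ht
  rw [Set.uIcc_of_le (by norm_num : (0:ℝ) ≤ 1/2)] at ht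
  exact (Real.continuousAt_rpow_const (1-t) s (Or.inl (by simp only [ne_eq, sub_eq_zero]; intro h; linarith [ht.2, h.symm]))).comp
    ((continuous_const.sub continuous_id).continuousAt)

private lemma aux_deriv (p q t : ℝ) (ht : 0 < t) (ht1 : t < 1) :
    HasDerivAt (fun t : ℝ => t ^ p * (1 - t) ^ q)
      (p * (t ^ (p - 1) * (1 - t) ^ q) - q * (t ^ p * (1 - t) ^ (q - 1))) t := by
  have h1 : HasDerivAt (fun t : ℝ => t ^ p) (p * t ^ (p - 1)) t :=
    Real.hasDerivAt_rpow_const (Or.inl ht.ne')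
  have h2 : HasDerivAt (fun t : ℝ => (1 - t) ^ q) (q * (1 - t) ^ (q - 1) * (-1)) t := by
    exact (Real.hasDerivAt_rpow_const (p := q) (x := 1 - t)
      (Or.inl (by intro h; rw [sub_eq_zero] at h; linarith))).comp t
      ((hasDerivAt_id t).const_sub 1)
  exact (h1.mul h2).congr_deriv (by ring)

private lemma aux_ftc (p p' q q' : ℝ) (hp : 0 < p) (hp' : p' = p - 1) (hq' : q' = q - 1) :
    p * (∫ t in (0:ℝ)..(1/2), t ^ p' * (1 - t) ^ q)
      - q * (∫ t in (0:ℝ)..(1/2), t ^ p * (1 - t) ^ q')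
      = (1/2:ℝ) ^ p * (1/2:ℝ) ^ q := by
  subst hp' hq'
  have hint1 : IntervalIntegrable (fun t : ℝ => t ^ (p-1) * (1 - t) ^ q) volume 0 (1/2) :=
    aux_intInt _ _ (by linarith)
  have hint2 : IntervalIntegrable (fun t : ℝ => t ^ p * (1 - t) ^ (q-1)) volume 0 (1/2) :=
    aux_intInt _ _ (by linarith)
  have key := intervalIntegral.integral_eq_sub_of_hasDerivAt_of_le
    (f := fun t : ℝ => t ^ p * (1 - t) ^ q)
    (f' := fun t : ℝ => p * (t ^ (p-1) * (1 - t) ^ q) - q * (t ^ p * (1 - t) ^ (q-1)))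
    (by norm_num : (0:ℝ) ≤ 1/2) ?_ ?_ ((hint1.const_mul p).sub (hint2.const_mul q))
  · rw [intervalIntegral.integral_sub (hint1.const_mul p) (hint2.const_mul q),
      intervalIntegral.integral_const_mul, intervalIntegral.integral_const_mul] at key
    rw [key]
    rw [Real.zero_rpow hp.ne', zero_mul, sub_zero]
    norm_num
  · apply ContinuousOn.mul
    · intro t _
      exact (Real.continuousAt_rpow_const t p (Or.inr hp.le)).continuousWithinAt
    · intro t ht
      exact ((Real.continuousAt_rpow_const (1-t) q (Or.inl (by
        intro h; rw [sub_eq_zero] at h; have := ht.2; rw [← h] at this; norm_num at this))).comp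
        ((continuous_const.sub continuous_id).continuousAt)).continuousWithinAt
  · intro t ht
    exact aux_deriv p q t ht.1 (by linarith [ht.2])

private lemma aux_beta (x : ℝ) (hx2 : x < 2) :
    ∫ t in (0:ℝ)..1, t ^ (1-x) * (1 - t) ^ (1-x)
      = Real.Gamma (2-x) ^ 2 / Real.Gamma (4-2*x) := by
  have h2x : (0:ℝ) < 2 - x := by linarith
  have hβ := Complex.Gamma_mul_Gamma_eq_betaIntegral
    (s := ((2-x:ℝ):ℂ)) (t := ((2-x:ℝ):ℂ)) (by simpa using h2x) (by simpa using h2x)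
  have hint : Complex.betaIntegral ((2-x:ℝ):ℂ) ((2-x:ℝ):ℂ)
      = ((∫ t in (0:ℝ)..1, t ^ (1-x) * (1 - t) ^ (1-x) : ℝ) : ℂ) := by
    rw [Complex.betaIntegral, ← intervalIntegral.integral_ofReal]
    apply intervalIntegral.integral_congr
    intro t ht
    rw [Set.uIcc_of_le (by norm_num : (0:ℝ) ≤ 1)] at ht
    simp only []
    rw [Complex.ofReal_mul, Complex.ofReal_cpow ht.1, Complex.ofReal_cpow (by linarith [ht.2])]
    push_cast
    ring_nf
  rw [hint, ← Complex.ofReal_add, show (2-x) + (2-x) = 4-2*x by ring,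
    Complex.Gamma_ofReal, Complex.Gamma_ofReal] at hβ
  have hβ' : Real.Gamma (2-x) * Real.Gamma (2-x)
      = Real.Gamma (4-2*x) * ∫ t in (0:ℝ)..1, t ^ (1-x) * (1 - t) ^ (1-x) := by
    exact_mod_cast hβ
  have hΓ : Real.Gamma (4-2*x) ≠ 0 := (Real.Gamma_pos_of_pos (by linarith)).ne'
  rw [eq_div_iff hΓ, sq]
  linarith [hβ']

private lemma aux_two : (2:ℝ)^(2:ℝ) = 4 := by
  rw [show (2:ℝ) = ((2:ℕ):ℝ) by norm_num, Real.rpow_natCast]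
  norm_num

/-- For every `x ∈ (3/2, 2)`,
`4^{x-1}·√π·Γ(2-x)/Γ(3/2-x) = 2^{2x-1} - x·∫_0^{1/2} t^{1-x}(1-t)^{-1-x} dt`. -/
theorem gamma_incomplete_beta_identity (x : ℝ) (hx : x ∈ Set.Ioo (3 / 2 : ℝ) 2) :
    (4 : ℝ) ^ (x - 1) * Real.sqrt Real.pi * Real.Gamma (2 - x) / Real.Gamma (3 / 2 - x)
      = (2 : ℝ) ^ (2 * x - 1)
        - x * ∫ t in (0 : ℝ)..(1 / 2 : ℝ), t ^ (1 - x) * (1 - t) ^ (-1 - x) := by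
  obtain ⟨hx1, hx2⟩ := hx
  have hx1 : (3:ℝ)/2 < x := hx1
  set A := ∫ t in (0:ℝ)..(1/2), t ^ (1-x) * (1-t) ^ (-1-x) with hAdef
  set B := ∫ t in (0:ℝ)..(1/2), t ^ (1-x) * (1-t) ^ (-x) with hBdef
  set C := ∫ t in (0:ℝ)..(1/2), t ^ (1-x) * (1-t) ^ (1-x) with hCdef
  have hintA : IntervalIntegrable (fun t : ℝ => t ^ (1-x) * (1-t) ^ (-1-x)) volume 0 (1/2) :=
    aux_intInt _ _ (by linarith)
  have hintB : IntervalIntegrable (fun t : ℝ => t ^ (1-x) * (1-t) ^ (-x)) volume 0 (1/2) :=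
    aux_intInt _ _ (by linarith)
  have hintC : IntervalIntegrable (fun t : ℝ => t ^ (1-x) * (1-t) ^ (1-x)) volume 0 (1/2) :=
    aux_intInt _ _ (by linarith)
  have h2xne : (2:ℝ) - x ≠ 0 := by intro h; linarith [sub_eq_zero.mp h]
  have h1xne : (1:ℝ) - x ≠ 0 := by intro h; linarith [sub_eq_zero.mp h]
  -- eliminate the auxiliary integrals
  have hD : (∫ t in (0:ℝ)..(1/2), t ^ (2-x) * (1-t) ^ (-1-x)) = A - B := by
    rw [hAdef, hBdef, ← intervalIntegral.integral_sub hintA hintB]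
    apply intervalIntegral.integral_congr
    intro t ht
    rw [Set.uIcc_of_le (by norm_num : (0:ℝ) ≤ 1/2)] at ht
    simp only []
    rcases eq_or_lt_of_le ht.1 with h0 | h0
    · rw [← h0]
      simp [Real.zero_rpow h2xne, Real.zero_rpow h1xne]
    · have h1t : (0:ℝ) < 1 - t := by linarith [ht.2]
      rw [show (2:ℝ)-x = 1+(1-x) by ring, Real.rpow_add h0, Real.rpow_one,
        show -x = 1 + (-1-x) by ring, Real.rpow_add h1t, Real.rpow_one]
      ring
  have hE : (∫ t in (0:ℝ)..(1/2), t ^ (2-x) * (1-t) ^ (-x)) = B - C := by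
    rw [hBdef, hCdef, ← intervalIntegral.integral_sub hintB hintC]
    apply intervalIntegral.integral_congr
    intro t ht
    rw [Set.uIcc_of_le (by norm_num : (0:ℝ) ≤ 1/2)] at ht
    simp only []
    rcases eq_or_lt_of_le ht.1 with h0 | h0
    · rw [← h0]
      simp [Real.zero_rpow h2xne, Real.zero_rpow h1xne]
    · have h1t : (0:ℝ) < 1 - t := by linarith [ht.2]
      rw [show (2:ℝ)-x = 1+(1-x) by ring, Real.rpow_add h0, Real.rpow_one,
        show (1:ℝ)-x = 1 + (-x) by ring, Real.rpow_add h1t, Real.rpow_one]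
      ring
  have Eq1 := aux_ftc (2-x) (1-x) (-x) (-1-x) (by linarith) (by ring) (by ring)
  have Eq2 := aux_ftc (2-x) (1-x) (1-x) (-x) (by linarith) (by ring) (by ring)
  rw [hD] at Eq1
  rw [hE] at Eq2
  -- power values
  have hhalf : ∀ a : ℝ, (1/2:ℝ) ^ a = 2 ^ (-a) := by
    intro a
    rw [show (1/2:ℝ) = 2⁻¹ by norm_num, Real.rpow_neg (by norm_num),
      Real.inv_rpow (by norm_num)]
  have hv1 : (1/2:ℝ) ^ (2-x) * (1/2:ℝ) ^ (-x) = 2 * (2:ℝ) ^ (2*x-3) := by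
    rw [hhalf, hhalf, ← Real.rpow_add (by norm_num : (0:ℝ) < 2),
      show -(2-x) + -(-x) = 2*x-2 by ring,
      show (2:ℝ)*x-2 = 1 + (2*x-3) by ring, Real.rpow_add (by norm_num : (0:ℝ) < 2),
      Real.rpow_one]
  have hv2 : (1/2:ℝ) ^ (2-x) * (1/2:ℝ) ^ (1-x) = (2:ℝ) ^ (2*x-3) := by
    rw [hhalf, hhalf, ← Real.rpow_add (by norm_num : (0:ℝ) < 2),
      show -(2-x) + -(1-x) = 2*x-3 by ring]
  have hv3 : (2:ℝ) ^ (2*x-1) = 4 * (2:ℝ) ^ (2*x-3) := by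
    rw [show (2:ℝ)*x-1 = 2 + (2*x-3) by ring, Real.rpow_add (by norm_num : (0:ℝ) < 2)]
    rw [aux_two]
  have key : x * A + (6-4*x) * C = (2:ℝ) ^ (2*x-1) := by
    linear_combination Eq1 + 2 * Eq2 + hv1 + 2 * hv2 - hv3
  -- symmetry: ∫_0^1 = 2*C
  have hfun : (fun t : ℝ => (1-t) ^ (1-x) * (1-(1-t)) ^ (1-x))
      = (fun t : ℝ => t ^ (1-x) * (1-t) ^ (1-x)) := by
    funext t; rw [sub_sub_cancel]; ring
  have hintC2 : IntervalIntegrable (fun t : ℝ => t ^ (1-x) * (1-t) ^ (1-x)) volume (1/2) 1 := by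
    have h := hintC.comp_sub_left 1
    norm_num at h
    rw [show (fun s : ℝ => (1-s) ^ (1-x) * s ^ (1-x))
      = (fun t : ℝ => t ^ (1-x) * (1-t) ^ (1-x)) from funext fun t => by ring] at h
    exact h.symm
  have hflip : (∫ t in (1/2:ℝ)..1, t ^ (1-x) * (1-t) ^ (1-x)) = C := by
    have h := intervalIntegral.integral_comp_sub_left
      (f := fun s : ℝ => s ^ (1-x) * (1-s) ^ (1-x)) (a := 0) (b := 1/2) 1
    norm_num at h
    rw [← h, hCdef]
    apply intervalIntegral.integral_congr
    intro t _
    simp only []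
    ring
  have hsplit : (∫ t in (0:ℝ)..1, t ^ (1-x) * (1-t) ^ (1-x)) = 2 * C := by
    rw [← intervalIntegral.integral_add_adjacent_intervals hintC hintC2, hflip, ← hCdef]
    ring
  have h2C : 2 * C = Real.Gamma (2-x) ^ 2 / Real.Gamma (4-2*x) := by
    rw [← hsplit, aux_beta x hx2]
  have h32ne : (3:ℝ)/2 - x ≠ 0 := by intro h; rw [sub_eq_zero] at h; linarith
  have hΓ32 : Real.Gamma (3/2 - x) ≠ 0 := by
    apply Real.Gamma_ne_zero
    intro m
    rcases m with _ | m
    · intro h; push_cast at h; linarith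
    · intro h; push_cast at h
      have : (0:ℝ) ≤ (m:ℝ) := Nat.cast_nonneg m
      linarith
  have hΓ4 : (0:ℝ) < Real.Gamma (4-2*x) := Real.Gamma_pos_of_pos (by linarith)
  have hdup := Real.Gamma_mul_Gamma_add_half (2-x)
  rw [show (2:ℝ)-x+1/2 = (3/2-x)+1 by ring, Real.Gamma_add_one h32ne,
    show 2*((2:ℝ)-x) = 4-2*x by ring] at hdup
  rw [show (1:ℝ)-(4-2*x) = 2*x-3 by ring] at hdup
  have h4 : (4:ℝ) ^ (x-1) = 2 * (2:ℝ) ^ (2*x-3) := by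
    rw [show (4:ℝ) = (2:ℝ)^(2:ℝ) from aux_two.symm,
      ← Real.rpow_mul (by norm_num : (0:ℝ) ≤ 2),
      show (2:ℝ)*(x-1) = 1 + (2*x-3) by ring,
      Real.rpow_add (by norm_num : (0:ℝ) < 2), Real.rpow_one]
  rw [show (2:ℝ) ^ (2*x-1) - x * A = (6-4*x) * C by linarith [key],
    show (6-4*x) * C = (3-2*x) * (2*C) by ring, h2C, h4]
  rw [← mul_div_assoc, div_eq_div_iff hΓ32 hΓ4.ne']
  linear_combination (-2 * Real.Gamma (2-x)) * hdup
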